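/- Let d, t ≥ 1 be integers, let D ∈ ℝ^{d×t}, let p ∈ ℝ^d, and let P = {x ∈ ℝ^t : x ≥ 0 componentwise and Dx = p}. Then for every x ∈ P there exists an extreme point u of P such that (t+1)·x ≥ u componentwise. -/

import Mathlib

/-- For `D ∈ ℝ^{d×t}` and `p ∈ ℝᵈ`, let `P = {x ≥ 0 : D x = p}`.  Every `x ∈ P`
dominates, after scaling by `t + 1`, some extreme point `u` of `P`:
`(t+1)·x ≥ u` componentwise. -/
theorem scaled_point_dominates_vertex
    (d t : ℕ) (hd : 1 ≤ d) (ht : 1 ≤ t)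
    (D : Matrix (Fin d) (Fin t) ℝ) (p : Fin d → ℝ)
    (P : Set (Fin t → ℝ))
    (hP : P = {x : Fin t → ℝ | (∀ i, 0 ≤ x i) ∧ D.mulVec x = p}) :
    ∀ x ∈ P, ∃ u ∈ P.extremePoints ℝ, ∀ i, u i ≤ ((t : ℝ) + 1) * x i := by
  subst hP
  intro x hx
  obtain ⟨hx0, hxD⟩ := hx
  classical
  set c : Fin t → ℝ := fun i => if x i = 0 then 0 else (x i)⁻¹ with hc
  set f : (Fin t → ℝ) → ℝ := fun y => ∑ i, c i * y i with hf
  have hc0 : ∀ i, 0 ≤ c i := by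
    intro i
    simp only [hc]
    split
    · exact le_refl 0
    · exact inv_nonneg.2 (hx0 i)
  have hfcont : Continuous f := by
    exact continuous_finset_sum _ fun i _ => (continuous_const.mul (continuous_apply i) : Continuous fun y : Fin t → ℝ => c i * y i)
  have hfaff : ∀ (θ μ : ℝ) (u v : Fin t → ℝ), f (θ • u + μ • v) = θ * f u + μ * f v := by
    intro θ μ u v
    simp only [hf, Pi.add_apply, Pi.smul_apply, smul_eq_mul, Finset.mul_sum]
    rw [← Finset.sum_add_distrib]
    exact Finset.sum_congr rfl fun i _ => by ring
  set Q : Set (Fin t → ℝ) :=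
    {y | (∀ i, 0 ≤ y i) ∧ D.mulVec y = p ∧ (∀ i, x i = 0 → y i = 0) ∧ f y ≤ (t:ℝ) + 1} with hQ
  have hQbound : ∀ y ∈ Q, ∀ i, y i ≤ ((t:ℝ)+1) * x i := by
    intro y hy i
    obtain ⟨hy0, _, hysupp, hyf⟩ := hy
    by_cases h : x i = 0
    · rw [hysupp i h, h]; simp
    · have h1 : c i * y i ≤ f y :=
        Finset.single_le_sum (fun j _ => mul_nonneg (hc0 j) (hy0 j)) (Finset.mem_univ i)
      have hxi : 0 < x i := lt_of_le_of_ne (hx0 i) (Ne.symm h)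
      have h2 : (x i)⁻¹ * y i ≤ (t:ℝ)+1 := by
        calc (x i)⁻¹ * y i = c i * y i := by simp [hc, h]
        _ ≤ f y := h1
        _ ≤ _ := hyf
      calc y i = x i * ((x i)⁻¹ * y i) := by field_simp
      _ ≤ x i * ((t:ℝ)+1) := mul_le_mul_of_nonneg_left h2 (le_of_lt hxi)
      _ = ((t:ℝ)+1) * x i := mul_comm _ _
  have hQclosed : IsClosed Q := by
    have h1 : IsClosed {y : Fin t → ℝ | ∀ i, 0 ≤ y i} := by
      rw [Set.setOf_forall]
      exact isClosed_iInter fun i => isClosed_le continuous_const (continuous_apply i)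
    have hmvcont : Continuous fun y : Fin t → ℝ => D.mulVec y := by
      refine continuous_pi fun i => ?_
      simpa [Matrix.mulVec, dotProduct] using
        (continuous_finset_sum Finset.univ fun j _ => (continuous_const.mul (continuous_apply j) : Continuous fun y : Fin t → ℝ => D i j * y j))
    have h2 : IsClosed {y : Fin t → ℝ | D.mulVec y = p} := isClosed_eq hmvcont continuous_const
    have h3 : IsClosed {y : Fin t → ℝ | ∀ i, x i = 0 → y i = 0} := by
      rw [Set.setOf_forall]
      refine isClosed_iInter fun i => ?_
      by_cases h : x i = 0
      · simp only [h, forall_true_left]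
        exact isClosed_eq (continuous_apply i) continuous_const
      · simp [h]
    have h4 : IsClosed {y : Fin t → ℝ | f y ≤ (t:ℝ)+1} := isClosed_le hfcont continuous_const
    have hQeq : Q = {y : Fin t → ℝ | ∀ i, 0 ≤ y i} ∩ ({y | D.mulVec y = p} ∩
        ({y | ∀ i, x i = 0 → y i = 0} ∩ {y | f y ≤ (t:ℝ)+1})) := by
      ext y
      simp only [hQ, Set.mem_setOf_eq, Set.mem_inter_iff, and_assoc]
    rw [hQeq]
    exact h1.inter (h2.inter (h3.inter h4))
  have hQcomp : IsCompact Q := by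
    refine IsCompact.of_isClosed_subset
      (isCompact_univ_pi fun i => isCompact_Icc (a := (0:ℝ)) (b := ((t:ℝ)+1) * x i))
      hQclosed ?_
    intro y hy
    exact Set.mem_univ_pi.2 fun i => ⟨hy.1 i, hQbound y hy i⟩
  have hQconv : Convex ℝ Q := by
    intro a ha b hb θ μ hθ hμ hθμ
    obtain ⟨ha0, haD, haS, haf⟩ := ha
    obtain ⟨hb0, hbD, hbS, hbf⟩ := hb
    refine ⟨fun i => ?_, ?_, fun i hi => ?_, ?_⟩
    · simpa using add_nonneg (mul_nonneg hθ (ha0 i)) (mul_nonneg hμ (hb0 i))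
    · rw [Matrix.mulVec_add, Matrix.mulVec_smul, Matrix.mulVec_smul, haD, hbD,
        ← add_smul, hθμ, one_smul]
    · simp [haS i hi, hbS i hi]
    · rw [hfaff]
      calc θ * f a + μ * f b ≤ θ*((t:ℝ)+1) + μ*((t:ℝ)+1) :=
            add_le_add (mul_le_mul_of_nonneg_left haf hθ) (mul_le_mul_of_nonneg_left hbf hμ)
      _ = (t:ℝ)+1 := by rw [← add_mul, hθμ, one_mul]
  have hfx : f x ≤ (t:ℝ) := by
    have hfx1 : f x = ∑ i, if x i = 0 then (0:ℝ) else 1 := by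
      refine Finset.sum_congr rfl fun i _ => ?_
      by_cases h : x i = 0 <;> simp [hc, h, inv_mul_cancel₀]
    rw [hfx1]
    calc ∑ i, (if x i = 0 then (0:ℝ) else 1) ≤ ∑ _i : Fin t, (1:ℝ) :=
          Finset.sum_le_sum fun i _ => by split <;> norm_num
    _ = t := by simp
  have hxQ : x ∈ Q := ⟨hx0, hxD, fun i hi => hi, by linarith⟩
  have hKM := closure_convexHull_extremePoints hQcomp hQconv
  have hexists : ∃ w ∈ Q.extremePoints ℝ, f w < (t:ℝ)+1 := by
    by_contra hcon
    push_neg at hcon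
    have hsub : Q.extremePoints ℝ ⊆ {y : Fin t → ℝ | f y = (t:ℝ)+1} := by
      intro w hw
      exact le_antisymm (extremePoints_subset hw).2.2.2 (hcon w hw)
    have hHconv : Convex ℝ {y : Fin t → ℝ | f y = (t:ℝ)+1} := by
      intro a ha b hb θ μ hθ hμ hθμ
      simp only [Set.mem_setOf_eq] at *
      rw [hfaff, ha, hb, ← add_mul, hθμ, one_mul]
    have hHcl : IsClosed {y : Fin t → ℝ | f y = (t:ℝ)+1} := isClosed_eq hfcont continuous_const
    have hQsub : Q ⊆ {y : Fin t → ℝ | f y = (t:ℝ)+1} := by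
      rw [← hKM]
      exact closure_minimal (convexHull_min hsub hHconv) hHcl
    have hxH := hQsub hxQ
    simp only [Set.mem_setOf_eq] at hxH
    linarith
  obtain ⟨w, hwext, hwf⟩ := hexists
  have hwQ : w ∈ Q := extremePoints_subset hwext
  obtain ⟨hw0, hwD, hwS, hwfle⟩ := hwQ
  refine ⟨w, ?_, hQbound w (extremePoints_subset hwext)⟩
  rw [mem_extremePoints]
  refine ⟨⟨hw0, hwD⟩, ?_⟩
  intro a ha b hb hseg
  obtain ⟨θ, μ, hθ, hμ, hθμ, hcomb⟩ := hseg
  obtain ⟨ha0, haD⟩ := ha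
  obtain ⟨hb0, hbD⟩ := hb
  have hvanish : ∀ i, x i = 0 → a i = 0 ∧ b i = 0 := by
    intro i hi
    have h := congrFun hcomb i
    simp only [Pi.add_apply, Pi.smul_apply, smul_eq_mul] at h
    rw [hwS i hi] at h
    have h1 : θ * a i = 0 :=
      le_antisymm (by nlinarith [mul_nonneg hμ.le (hb0 i)]) (mul_nonneg hθ.le (ha0 i))
    have h2 : μ * b i = 0 :=
      le_antisymm (by nlinarith [mul_nonneg hθ.le (ha0 i)]) (mul_nonneg hμ.le (hb0 i))
    constructor
    · rcases mul_eq_zero.1 h1 with h' | h'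
      · exact absurd h' (ne_of_gt hθ)
      · exact h'
    · rcases mul_eq_zero.1 h2 with h' | h'
      · exact absurd h' (ne_of_gt hμ)
      · exact h'
  set δ : ℝ := (t:ℝ) + 1 - f w with hδ
  have hδpos : 0 < δ := by simp only [hδ]; linarith
  set M : ℝ := 1 + |f a - f w| + |f b - f w| with hM
  have hMpos : 0 < M := by positivity
  set ε : ℝ := min 1 (δ / M) with hε
  have hε0 : 0 < ε := lt_min one_pos (div_pos hδpos hMpos)
  have hε1 : ε ≤ 1 := min_le_left _ _
  have hεM : ε ≤ δ / M := min_le_right _ _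
  have hbnd : ∀ g : ℝ, |g - f w| ≤ M - 1 → f w + ε * (g - f w) ≤ (t:ℝ)+1 := by
    intro g hg
    have h1 : g - f w ≤ |g - f w| := le_abs_self _
    have h3 : ε * (g - f w) ≤ δ := by
      rcases le_or_gt (g - f w) 0 with h | h
      · nlinarith
      · calc ε * (g - f w) ≤ (δ/M) * (g - f w) := mul_le_mul_of_nonneg_right hεM h.le
          _ ≤ (δ/M) * M := by
              refine mul_le_mul_of_nonneg_left ?_ (by positivity)
              linarith
          _ = δ := div_mul_cancel₀ _ (ne_of_gt hMpos)
    simp only [hδ] at h3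
    linarith
  set a' : Fin t → ℝ := (1-ε) • w + ε • a with ha'
  set b' : Fin t → ℝ := (1-ε) • w + ε • b with hb'
  have hmem : ∀ z : Fin t → ℝ, (∀ i, 0 ≤ z i) → D.mulVec z = p →
      (∀ i, x i = 0 → z i = 0) → |f z - f w| ≤ M - 1 → ((1-ε) • w + ε • z) ∈ Q := by
    intro z hz0 hzD hzS hzM
    refine ⟨fun i => ?_, ?_, fun i hi => ?_, ?_⟩
    · simpa using add_nonneg (mul_nonneg (by linarith) (hw0 i)) (mul_nonneg hε0.le (hz0 i))
    · rw [Matrix.mulVec_add, Matrix.mulVec_smul, Matrix.mulVec_smul, hwD, hzD,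
        ← add_smul]
      norm_num
    · simp [hwS i hi, hzS i hi]
    · rw [hfaff]
      have := hbnd (f z) hzM
      linarith
  have ha'Q : a' ∈ Q := hmem a ha0 haD (fun i hi => (hvanish i hi).1)
    (by simp only [hM]; have := abs_nonneg (f b - f w); linarith)
  have hb'Q : b' ∈ Q := hmem b hb0 hbD (fun i hi => (hvanish i hi).2)
    (by simp only [hM]; have := abs_nonneg (f a - f w); linarith)
  have hcomb' : θ • a' + μ • b' = w := by
    funext i
    have h := congrFun hcomb i
    simp only [Pi.add_apply, Pi.smul_apply, smul_eq_mul] at h ⊢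
    simp only [ha', hb', Pi.add_apply, Pi.smul_apply, smul_eq_mul]
    linear_combination ε * h + ((1-ε) * w i) * hθμ
  obtain ⟨hA, hB⟩ := (mem_extremePoints.1 hwext).2 a' ha'Q b' hb'Q ⟨θ, μ, hθ, hμ, hθμ, hcomb'⟩
  constructor
  · funext i
    have h := congrFun hA i
    simp only [ha', Pi.add_apply, Pi.smul_apply, smul_eq_mul] at h
    have : ε * a i = ε * w i := by linarith
    exact mul_left_cancel₀ (ne_of_gt hε0) this
  · funext i
    have h := congrFun hB i
    simp only [hb', Pi.add_apply, Pi.smul_apply, smul_eq_mul] at h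
    have : ε * b i = ε * w i := by linarith
    exact mul_left_cancel₀ (ne_of_gt hε0) this
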